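/- For the dual contraction operator ⋆ defined on monomials by x^θ ⋆ ∂x^σ = ∂x^{σ−θ} when θ ≤ σ componentwise and 0 otherwise, and the evaluation functional 𝟙_α(d) := Σ_{σ: |σ|=d} (α^σ / α₀^d) ∂x^σ (for a point α with α₀ ≠ 0), one has: for any homogeneous polynomial g of degree d̄ ≤ d, g ⋆ 𝟙_α(d) = (g(α)/α₀^{d̄}) · 𝟙_α(d − d̄). -/

import Mathlib

open MvPolynomial Finsupp

/-- The dual contraction of a polynomial `g` with a dual element `φ` (a dual element of
the polynomial ring is represented by its coefficient function on monomial exponents):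
on monomials, `x^θ ⋆ ∂x^σ = ∂x^{σ−θ}` if `θ ≤ σ` and `0` otherwise. -/
noncomputable def contract {K : Type*} [Field K] {n : ℕ}
    (g : MvPolynomial (Fin (n + 1)) K) (φ : (Fin (n + 1) →₀ ℕ) → K) :
    (Fin (n + 1) →₀ ℕ) → K :=
  fun τ => ∑ θ ∈ g.support, g.coeff θ * φ (τ + θ)

/-- The normalized evaluation functional `𝟙_α(d) = Σ_{|σ|=d} (α^σ/α₀^d) ∂x^σ`. -/
noncomputable def evalFunctional {K : Type*} [Field K] {n : ℕ}
    (α : Fin (n + 1) → K) (d : ℕ) : (Fin (n + 1) →₀ ℕ) → K :=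
  fun σ => if (σ.sum fun _ e => e) = d then (σ.prod fun i e => α i ^ e) / (α 0) ^ d else 0

/-- For `g` homogeneous of degree `d̄ ≤ d`, `g ⋆ 𝟙_α(d) = (g(α)/α₀^{d̄}) · 𝟙_α(d − d̄)`. -/
theorem stmt8 {K : Type*} [Field K] {n : ℕ} (α : Fin (n + 1) → K) (hα : α 0 ≠ 0)
    (d dbar : ℕ) (hd : dbar ≤ d) (g : MvPolynomial (Fin (n + 1)) K)
    (hg : g.IsHomogeneous dbar) :
    contract g (evalFunctional α d)
      = fun τ => (eval α g / (α 0) ^ dbar) * evalFunctional α (d - dbar) τ := by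
  funext τ
  have key : ∀ θ ∈ g.support,
      g.coeff θ * evalFunctional α d (τ + θ)
        = (g.coeff θ * (θ.prod fun i e => α i ^ e) / (α 0) ^ dbar)
            * evalFunctional α (d - dbar) τ := by
    intro θ hθ
    have hdeg : (θ.sum fun _ e => e) = dbar := by
      have := hg (MvPolynomial.mem_support_iff.mp hθ)
      simpa [Finsupp.weight, Finsupp.linearCombination, Finsupp.sum] using this
    have hsum : ((τ + θ).sum fun _ e => e) = (τ.sum fun _ e => e) + dbar := by
      rw [Finsupp.sum_add_index' (fun _ => rfl) (fun _ _ _ => rfl), hdeg]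
    have hprod : ((τ + θ).prod fun i e => α i ^ e)
        = (τ.prod fun i e => α i ^ e) * (θ.prod fun i e => α i ^ e) := by
      exact Finsupp.prod_add_index' (fun i => pow_zero (α i)) (fun i a b => pow_add (α i) a b)
    unfold evalFunctional
    by_cases h : (τ.sum fun _ e => e) = d - dbar
    · have hc : ((τ + θ).sum fun _ e => e) = d := by omega
      rw [if_pos h, if_pos hc, hprod]
      have : (α 0) ^ d = (α 0) ^ dbar * (α 0) ^ (d - dbar) := by
        rw [← pow_add]; congr 1; omega
      rw [this]
      field_simp
    · have hc : ((τ + θ).sum fun _ e => e) ≠ d := by omega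
      rw [if_neg h, if_neg hc]
      ring
  unfold contract
  rw [Finset.sum_congr rfl key, ← Finset.sum_mul, eval_eq, Finset.sum_div]
  rfl
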